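/- For the 2-safety reduction in the undecidability proof: if T has an inductive invariant Inv for (pre, post), then the pair consisting of the lock-step composition and the composed invariant Inv* = b¹ ∧ Inv(V¹) ∧ ¬b² ∧ ⋀_v (v² = a_v) is a composition-invariant pair for the augmented system T* and the 2-safety property (pre*, post*); conversely, from any composition-invariant pair (f, Inv*) for T* one obtains an inductive invariant for T and (pre, post) by substituting b² ↦ false and v² ↦ a_v in Inv*. -/
import Mathlib


/-- The reduction used in the undecidability proof.  `T*` augments `T`
with a Boolean `b`; transitions are `(b ∧ R ∧ b') ∨ (¬b ∧ s' = a ∧ ¬b')`, terminal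
states are `F ∨ (¬b ∧ s = a)`.  If `T` has an inductive invariant `Inv` for
`(pre, post)` then lock-step composition together with
`Inv* = b¹ ∧ Inv(V¹) ∧ ¬b² ∧ (V² = a)` is a composition-invariant pair for `T*` and
the 2-safety property `(pre*, post*)`; conversely, from any composition-invariant pair
`(C, I)` for `T*` one gets an inductive invariant for `T` and `(pre, post)` by
substituting `b² ↦ false`, `V² ↦ a` (and `b¹ ↦ true`) in `I`. -/
theorem undecidability_reduction {S : Type*} (R : S → S → Prop)
    (F pre post : Set S) (a : S)
    (hterm : ∀ s ∈ F, R s s ∧ ∀ t, R s t → t = s) :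
    let Rs : S × Bool → S × Bool → Prop := fun p q =>
      (p.2 = true ∧ R p.1 q.1 ∧ q.2 = true) ∨ (p.2 = false ∧ q.1 = a ∧ q.2 = false)
    let Fs : Set (S × Bool) := {p | p.1 ∈ F ∨ (p.2 = false ∧ p.1 = a)}
    let preS : Set (Fin 2 → S × Bool) :=
      {x | (x 0).2 = true ∧ (x 0).1 ∈ pre ∧ (x 1).2 = false ∧ (x 1).1 = a}
    let postS : Set (Fin 2 → S × Bool) :=
      {x | (x 0).2 = true ∧ (x 0).1 ∈ post ∧ (x 1).2 = false ∧ (x 1).1 = a}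
    let Pair : (Finset (Fin 2) → Set (Fin 2 → S × Bool)) → Set (Fin 2 → S × Bool) →
        Prop := fun C I =>
      preS ⊆ I ∧
      (∀ M : Finset (Fin 2), M.Nonempty → ∀ x x' : Fin 2 → S × Bool,
        x ∈ I → x ∈ C M → (∀ i ∈ M, Rs (x i) (x' i)) → (∀ i ∉ M, x' i = x i) →
        x' ∈ I) ∧
      (∀ x ∈ I, (∀ i, x i ∈ Fs) → x ∈ postS) ∧
      (∀ x ∈ I, ∃ M : Finset (Fin 2), M.Nonempty ∧ x ∈ C M) ∧
      (∀ (M : Finset (Fin 2)) (x : Fin 2 → S × Bool), x ∈ C M →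
        (∃ i, x i ∉ Fs) → ∃ j ∈ M, x j ∉ Fs)
    (∀ Inv : Set S,
      pre ⊆ Inv → (∀ s s', s ∈ Inv → R s s' → s' ∈ Inv) →
      (∀ s ∈ Inv, s ∈ F → s ∈ post) →
      Pair (fun M => if M = Finset.univ then Set.univ else ∅)
        {x | (x 0).2 = true ∧ (x 0).1 ∈ Inv ∧ (x 1).2 = false ∧ (x 1).1 = a}) ∧
    (∀ (C : Finset (Fin 2) → Set (Fin 2 → S × Bool)) (I : Set (Fin 2 → S × Bool)),
      Pair C I →
      (pre ⊆ {s | (![(s, true), (a, false)] : Fin 2 → S × Bool) ∈ I}) ∧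
      (∀ s s', s ∈ {s | (![(s, true), (a, false)] : Fin 2 → S × Bool) ∈ I} → R s s' →
        s' ∈ {s | (![(s, true), (a, false)] : Fin 2 → S × Bool) ∈ I}) ∧
      (∀ s ∈ {s | (![(s, true), (a, false)] : Fin 2 → S × Bool) ∈ I},
        s ∈ F → s ∈ post)) := by
  intro Rs Fs preS postS Pair
  constructor
  · intro Inv hpre hstep hsafe
    refine ⟨?_, ?_, ?_, ?_, ?_⟩
    · rintro x ⟨h1, h2, h3, h4⟩; exact ⟨h1, hpre h2, h3, h4⟩
    · intro M hM x x' hx hC hstepM hfix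
      rcases hx with ⟨h1, h2, h3, h4⟩
      by_cases hMu : M = Finset.univ
      · subst hMu
        have s0 := hstepM 0 (Finset.mem_univ 0)
        have s1 := hstepM 1 (Finset.mem_univ 1)
        rcases s0 with ⟨hb, hR, hb'⟩ | ⟨hb, _, _⟩
        · rcases s1 with ⟨hb1, _, _⟩ | ⟨_, ha', hb1'⟩
          · rw [h3] at hb1; exact absurd hb1 (by simp)
          · exact ⟨hb', hstep _ _ h2 hR, hb1', ha'⟩
        · rw [h1] at hb; exact absurd hb (by simp)
      · simp only [if_neg hMu] at hC; exact absurd hC (by simp)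
    · intro x hx hall
      rcases hx with ⟨h1, h2, h3, h4⟩
      rcases hall 0 with h | ⟨hb, _⟩
      · exact ⟨h1, hsafe _ h2 h, h3, h4⟩
      · rw [h1] at hb; exact absurd hb (by simp)
    · intro x _; exact ⟨Finset.univ, Finset.univ_nonempty, by simp⟩
    · intro M x hC ⟨i, hi⟩
      by_cases hMu : M = Finset.univ
      · exact ⟨i, hMu ▸ Finset.mem_univ i, hi⟩
      · simp only [if_neg hMu] at hC; exact absurd hC (by simp)
  · intro C I hP
    obtain ⟨hinit, hcons, hsafe, hcov, hfair⟩ := hP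
    refine ⟨?_, ?_, ?_⟩
    · intro s hs
      exact hinit ⟨by simp, by simpa using hs, by simp, by simp⟩
    · intro s s' hI hR
      simp only [Set.mem_setOf_eq] at hI ⊢
      by_cases hF : s ∈ F
      · rwa [(hterm s hF).2 s' hR]
      obtain ⟨M, hMne, hMC⟩ := hcov _ hI
      have h0M : (0 : Fin 2) ∈ M := by
        have hnot : (![(s, true), (a, false)] : Fin 2 → S × Bool) 0 ∉ Fs := by
          simp [Fs, hF]
        obtain ⟨j, hjM, hjF⟩ := hfair M _ hMC ⟨0, hnot⟩
        fin_cases j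
        · exact hjM
        · exfalso; apply hjF; simp [Fs]
      set x : Fin 2 → S × Bool := ![(s, true), (a, false)] with hxdef
      set x' : Fin 2 → S × Bool := fun i => if i = 0 then (s', true) else x i
        with hx'def
      have hx'eq : x' = ![(s', true), (a, false)] := by
        funext i; fin_cases i <;> simp [hx'def, hxdef]
      have := hcons M hMne x x' hI hMC ?_ ?_
      · rwa [hx'eq] at this
      · intro i hiM
        fin_cases i
        · left; simp [hx'def, hxdef, hR]
        · right; simp [hx'def, hxdef]
      · intro i hiM
        fin_cases i
        · exact absurd h0M hiM
        · simp [hx'def]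
    · intro s hI hF
      have := hsafe _ hI ?_
      · exact this.2.1
      · intro i; fin_cases i
        · simp only [Fs, Set.mem_setOf_eq]; exact Or.inl (by simpa using hF)
        · simp [Fs]
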